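/- A surjective quandle homomorphism f : A → B is a normal extension (i.e., the first projection Eq(f) → A from the kernel congruence is a trivial extension) if and only if the following condition (N) holds: for all a_0,…,a_n ∈ A and exponents α_1,…,α_n ∈ {−1,1}, if a_0 ◁^{α_1} a_1 ◁^{α_2} ⋯ ◁^{α_n} a_n = a_0, then a'_0 ◁^{α_1} a'_1 ⋯ ◁^{α_n} a'_n = a'_0 for all a'_i with f(a'_i) = f(a_i). -/

import Mathlib

/-- A quandle in the sense of the paper: a set with two binary operations
`act` (`◁`) and `inv` (`◁⁻¹`) satisfying idempotency, right invertibility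
and (right) self-distributivity. -/
class Quandle' (A : Type*) where
  act : A → A → A
  inv : A → A → A
  idem : ∀ a, act a a = a
  inv_act : ∀ a b, inv (act a b) b = a
  act_inv : ∀ a b, act (inv a b) b = a
  distrib : ∀ a b c, act (act a b) c = act (act a c) (act b c)

open Quandle'

/-- A quandle homomorphism preserves both operations. -/
def IsQuandleHom {A B : Type*} [Quandle' A] [Quandle' B] (f : A → B) : Prop :=
  (∀ a a', f (act a a') = act (f a) (f a')) ∧
  (∀ a a', f (inv a a') = inv (f a) (f a'))

/-- The right translation `ρ_b : a ↦ a ◁ b`, as a permutation of `A`. -/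
def rho {A : Type*} [Quandle' A] (b : A) : Equiv.Perm A :=
  ⟨fun a => act a b, fun a => inv a b, fun a => inv_act a b, fun a => act_inv a b⟩

/-- The group of inner automorphisms of a quandle, as a subgroup of `Equiv.Perm A`. -/
def Inn (A : Type*) [Quandle' A] : Subgroup (Equiv.Perm A) :=
  Subgroup.closure (Set.range (rho (A := A)))

/-- The orbit relation `∼_N` associated with a subgroup `N ≤ Perm A`. -/
def orbitRel {A : Type*} [Quandle' A] (N : Subgroup (Equiv.Perm A)) (a b : A) : Prop :=
  ∃ n ∈ N, n a = b

/-- Two elements are in the same connected component when they are in the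
same orbit of `Inn A`. -/
def sameComponent {A : Type*} [Quandle' A] (a b : A) : Prop :=
  orbitRel (Inn A) a b

/-- Trivial extension: a surjective quandle homomorphism such that elements with the
same image lying in the same connected component are equal (condition (T)). -/
def IsTrivialExt {A B : Type*} [Quandle' A] [Quandle' B] (f : A → B) : Prop :=
  Function.Surjective f ∧ IsQuandleHom f ∧
    ∀ a a', f a = f a' → sameComponent a a' → a = a'

/-- Evaluation of a word `a₀ ◁^{α₁} a₁ ◁^{α₂} ⋯ ◁^{αₙ} aₙ`; `true` stands for
exponent `1` and `false` for exponent `-1`. -/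
def wordEval {A : Type*} [Quandle' A] (a₀ : A) (l : List (Bool × A)) : A :=
  l.foldl (fun x p => if p.1 then act x p.2 else inv x p.2) a₀

/-- Condition (N) characterizing normal extensions. -/
def CondN {A B : Type*} [Quandle' A] [Quandle' B] (f : A → B) : Prop :=
  ∀ (a₀ : A) (l : List (Bool × A)), wordEval a₀ l = a₀ →
    ∀ (a₀' : A) (l' : List (Bool × A)), f a₀' = f a₀ →
      List.Forall₂ (fun p q => p.1 = q.1 ∧ f p.2 = f q.2) l l' →
      wordEval a₀' l' = a₀'

/-- Normal extension (via condition (N)). -/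
def IsNormalExt {A B : Type*} [Quandle' A] [Quandle' B] (f : A → B) : Prop :=
  Function.Surjective f ∧ IsQuandleHom f ∧ CondN f

/-- Quandle covering in the sense of Eisermann (= central extension). -/
def IsCovering {A B : Type*} [Quandle' A] [Quandle' B] (f : A → B) : Prop :=
  Function.Surjective f ∧ IsQuandleHom f ∧
    ∀ a a' c, f a = f a' → act c a = act c a'

/-- A congruence on a quandle: an equivalence relation compatible with both operations. -/
def IsCongruence {A : Type*} [Quandle' A] (r : A → A → Prop) : Prop :=
  Equivalence r ∧
    ∀ a a' b b', r a b → r a' b' → r (act a a') (act b b') ∧ r (inv a a') (inv b b')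

/-- Relational composition: `(a,b) ∈ relComp S R` iff `∃ c, R a c ∧ S c b`. -/
def relComp {X : Type*} (S R : X → X → Prop) (a b : X) : Prop :=
  ∃ c, R a c ∧ S c b

/-- The kernel congruence of a map. -/
def eqRel {A B : Type*} (f : A → B) (a a' : A) : Prop := f a = f a'

/-- The image of a relation along a map. -/
def imageRel {A B : Type*} (f : A → B) (R : A → A → Prop) (b b' : B) : Prop :=
  ∃ a a', R a a' ∧ f a = b ∧ f a' = b'

instance prodQuandle {A B : Type*} [Quandle' A] [Quandle' B] : Quandle' (A × B) where
  act p q := (act p.1 q.1, act p.2 q.2)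
  inv p q := (inv p.1 q.1, inv p.2 q.2)
  idem p := Prod.ext (idem p.1) (idem p.2)
  inv_act p q := Prod.ext (inv_act p.1 q.1) (inv_act p.2 q.2)
  act_inv p q := Prod.ext (act_inv p.1 q.1) (act_inv p.2 q.2)
  distrib p q r := Prod.ext (distrib p.1 q.1 r.1) (distrib p.2 q.2 r.2)

/-- The pullback of `f : A → C` and `g : B → C` as a set. -/
def Pullback {A B C : Type*} (f : A → C) (g : B → C) : Type _ :=
  { p : A × B // f p.1 = g p.2 }

/-- The quandle structure on a pullback of two quandle homomorphisms. -/
def pullbackQuandle {A B C : Type*} [Quandle' A] [Quandle' B] [Quandle' C]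
    (f : A → C) (g : B → C) (hf : IsQuandleHom f) (hg : IsQuandleHom g) :
    Quandle' (Pullback f g) where
  act p q := ⟨act p.1 q.1, by
    show f (act p.1.1 q.1.1) = g (act p.1.2 q.1.2)
    rw [hf.1, hg.1, p.2, q.2]⟩
  inv p q := ⟨inv p.1 q.1, by
    show f (inv p.1.1 q.1.1) = g (inv p.1.2 q.1.2)
    rw [hf.2, hg.2, p.2, q.2]⟩
  idem p := Subtype.ext (idem p.1)
  inv_act p q := Subtype.ext (inv_act p.1 q.1)
  act_inv p q := Subtype.ext (act_inv p.1 q.1)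
  distrib p q r := Subtype.ext (distrib p.1 q.1 r.1)

/-- The congruence generated by a relation `R`. -/
def congClosure {A : Type*} [Quandle' A] (R : A → A → Prop) (a b : A) : Prop :=
  ∀ S : A → A → Prop, IsCongruence S → (∀ x y, R x y → S x y) → S a b

/-- The congruence generated by `R`, as a setoid. -/
def congClosureSetoid {A : Type*} [Quandle' A] (R : A → A → Prop) : Setoid A :=
  ⟨congClosure R,
    ⟨fun a S hS _ => hS.1.refl a,
     fun h S hS hR => hS.1.symm (h S hS hR),
     fun h1 h2 S hS hR => hS.1.trans (h1 S hS hR) (h2 S hS hR)⟩⟩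

/-- The quotient quandle by the congruence generated by `R`. -/
def quotQuandle {A : Type*} [Quandle' A] (R : A → A → Prop) :
    Quandle' (Quotient (congClosureSetoid R)) where
  act := Quotient.map₂ act
    (fun _ _ h _ _ h' S hS hR => (hS.2 _ _ _ _ (h S hS hR) (h' S hS hR)).1)
  inv := Quotient.map₂ inv
    (fun _ _ h _ _ h' S hS hR => (hS.2 _ _ _ _ (h S hS hR) (h' S hS hR)).2)
  idem q := Quotient.inductionOn q fun a => congrArg (Quotient.mk _) (idem a)
  inv_act q r := Quotient.inductionOn₂ q r fun a b => congrArg (Quotient.mk _) (inv_act a b)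
  act_inv q r := Quotient.inductionOn₂ q r fun a b => congrArg (Quotient.mk _) (act_inv a b)
  distrib q r s := Quotient.inductionOn₃ q r s fun a b c => congrArg (Quotient.mk _) (distrib a b c)

section Aux

variable {X : Type*} [Quandle' X]

/-- One step of word evaluation. -/
def step (a : X) (p : Bool × X) : X := if p.1 then act a p.2 else inv a p.2

lemma wordEval_cons (a : X) (p : Bool × X) (l : List (Bool × X)) :
    wordEval a (p :: l) = wordEval (step a p) l := rfl

lemma wordEval_append (a : X) (l l' : List (Bool × X)) :
    wordEval a (l ++ l') = wordEval (wordEval a l) l' :=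
  List.foldl_append

lemma sameComponent_refl (a : X) : sameComponent a a := ⟨1, one_mem _, rfl⟩

lemma sameComponent_trans {a b c : X} :
    sameComponent a b → sameComponent b c → sameComponent a c
  | ⟨n, hn, ha⟩, ⟨m, hm, hb⟩ =>
    ⟨m * n, mul_mem hm hn, by rw [Equiv.Perm.mul_apply, ha, hb]⟩

lemma sameComponent_step (a : X) (p : Bool × X) : sameComponent a (step a p) := by
  rcases p with ⟨b, x⟩
  cases b
  · exact ⟨(rho x)⁻¹, inv_mem (Subgroup.subset_closure ⟨x, rfl⟩), rfl⟩
  · exact ⟨rho x, Subgroup.subset_closure ⟨x, rfl⟩, rfl⟩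

lemma sameComponent_wordEval (l : List (Bool × X)) :
    ∀ a : X, sameComponent a (wordEval a l) := by
  induction l with
  | nil => intro a; exact sameComponent_refl a
  | cons p t ih =>
    intro a
    exact sameComponent_trans (sameComponent_step a p) (ih (step a p))

/-- Reverse the word and flip all exponents. -/
def revFlip {Y : Type*} (l : List (Bool × Y)) : List (Bool × Y) :=
  (l.map fun p => (!p.1, p.2)).reverse

lemma step_flip (a : X) (p : Bool × X) : step (step a p) (!p.1, p.2) = a := by
  rcases p with ⟨b, x⟩
  cases b <;> simp [step, act_inv, inv_act]

lemma wordEval_revFlip (l : List (Bool × X)) :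
    ∀ a : X, wordEval (wordEval a l) (revFlip l) = a := by
  induction l with
  | nil => intro a; rfl
  | cons p t ih =>
    intro a
    have h : revFlip (p :: t) = revFlip t ++ [(!p.1, p.2)] := by simp [revFlip]
    rw [wordEval_cons, h, wordEval_append, ih (step a p)]
    exact step_flip a p

lemma mem_Inn_word {n : Equiv.Perm X} (hn : n ∈ Inn X) (a : X) :
    ∃ l : List (Bool × X), wordEval a l = n a := by
  let S : Subgroup (Equiv.Perm X) :=
    { carrier := {n : Equiv.Perm X | ∀ a : X, ∃ l, wordEval a l = n a}
      one_mem' := fun a => ⟨[], rfl⟩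
      mul_mem' := by
        intro n m hn hm a
        obtain ⟨l, hl⟩ := hm a
        obtain ⟨l', hl'⟩ := hn (m a)
        exact ⟨l ++ l', by rw [wordEval_append, hl, hl', Equiv.Perm.mul_apply]⟩
      inv_mem' := by
        intro n hn a
        obtain ⟨l, hl⟩ := hn (n⁻¹ a)
        refine ⟨revFlip l, ?_⟩
        have h := wordEval_revFlip l (n⁻¹ a)
        rw [hl, (show n (n⁻¹ a) = a from Equiv.apply_symm_apply n a)] at h
        exact h }
  have hle : Inn X ≤ S := (Subgroup.closure_le S).mpr (by
    rintro _ ⟨b, rfl⟩ a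
    exact ⟨[(true, b)], rfl⟩)
  exact hle hn a

end Aux

section Pull

variable {A B : Type*} [Quandle' A] [Quandle' B] (f : A → B) (hhom : IsQuandleHom f)

lemma pull_fst :
    letI := pullbackQuandle f f hhom hhom
    ∀ (l : List (Bool × Pullback f f)) (p : Pullback f f),
      (wordEval p l).1.1 = wordEval p.1.1 (l.map fun q => (q.1, q.2.1.1)) := by
  letI := pullbackQuandle f f hhom hhom
  intro l
  induction l with
  | nil => intro p; rfl
  | cons q t ih =>
    intro p
    rw [wordEval_cons, List.map_cons, wordEval_cons, ih]
    congr 1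
    rcases q with ⟨b, x⟩
    cases b <;> rfl

lemma pull_snd :
    letI := pullbackQuandle f f hhom hhom
    ∀ (l : List (Bool × Pullback f f)) (p : Pullback f f),
      (wordEval p l).1.2 = wordEval p.1.2 (l.map fun q => (q.1, q.2.1.2)) := by
  letI := pullbackQuandle f f hhom hhom
  intro l
  induction l with
  | nil => intro p; rfl
  | cons q t ih =>
    intro p
    rw [wordEval_cons, List.map_cons, wordEval_cons, ih]
    congr 1
    rcases q with ⟨b, x⟩
    cases b <;> rfl

lemma lift_words :
    ∀ (l l' : List (Bool × A)),
      List.Forall₂ (fun p q => p.1 = q.1 ∧ f p.2 = f q.2) l l' →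
      ∃ lE : List (Bool × Pullback f f),
        lE.map (fun q => (q.1, q.2.1.1)) = l ∧ lE.map (fun q => (q.1, q.2.1.2)) = l' := by
  intro l l' h
  induction h with
  | nil => exact ⟨[], rfl, rfl⟩
  | @cons p q t t' hpq _ ih =>
    obtain ⟨lE, h1, h2⟩ := ih
    exact ⟨(p.1, ⟨(p.2, q.2), hpq.2⟩) :: lE, by simp [h1], by simp [h2, hpq.1]⟩

end Pull

theorem stmt11 {A B : Type*} [Quandle' A] [Quandle' B] (f : A → B)
    (hf : Function.Surjective f) (hhom : IsQuandleHom f) :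
    (letI : Quandle' (Pullback f f) := pullbackQuandle f f hhom hhom
     IsTrivialExt (fun p : Pullback f f => p.1.1)) ↔ CondN f := by
  letI : Quandle' (Pullback f f) := pullbackQuandle f f hhom hhom
  constructor
  · rintro ⟨-, -, htriv⟩
    intro a₀ l hl a₀' l' hfa hF
    obtain ⟨lE, h1, h2⟩ := lift_words f l l' hF
    set p : Pullback f f := ⟨(a₀, a₀'), hfa.symm⟩ with hp
    have hcomp := sameComponent_wordEval lE p
    have hfst : (wordEval p lE).1.1 = a₀ := by
      rw [pull_fst f hhom lE p, h1]; exact hl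
    have hsnd : (wordEval p lE).1.2 = wordEval a₀' l' := by
      rw [pull_snd f hhom lE p, h2]
    have heq : p = wordEval p lE := htriv p (wordEval p lE) hfst.symm hcomp
    have h2' := congrArg (fun q : Pullback f f => q.1.2) heq
    simp only [hsnd] at h2'
    exact h2'.symm
  · intro hN
    refine ⟨fun a => ⟨⟨(a, a), rfl⟩, rfl⟩, ⟨fun p q => rfl, fun p q => rfl⟩, ?_⟩
    intro p q hpq hcomp
    obtain ⟨n, hn, hna⟩ := hcomp
    obtain ⟨lE, hlE⟩ := mem_Inn_word hn p
    rw [hna] at hlE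
    have hfst : wordEval p.1.1 (lE.map fun r => (r.1, r.2.1.1)) = p.1.1 := by
      rw [← pull_fst f hhom lE p, hlE]; exact hpq.symm
    have hF : ∀ t : List (Bool × Pullback f f), List.Forall₂ (fun r s => r.1 = s.1 ∧ f r.2 = f s.2)
        (t.map fun r => (r.1, r.2.1.1)) (t.map fun r => (r.1, r.2.1.2)) := by
      intro t
      induction t with
      | nil => exact List.Forall₂.nil
      | cons r t ih => exact List.Forall₂.cons ⟨rfl, r.2.2⟩ ih
    have hsnd := hN p.1.1 _ hfst p.1.2 _ p.2.symm (hF lE)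
    have h2 : (wordEval p lE).1.2 = p.1.2 := by
      rw [pull_snd f hhom lE p]; exact hsnd
    rw [hlE] at h2
    exact Subtype.ext (Prod.ext hpq h2.symm)
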